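/- Fix integers m > 0 and σ > 1. For strings X, X' over alphabet [0..σ) of length at most m, define Int(X) as the integer whose base-σ representation (of total length 2m) is obtained by appending 2m - 2|X| zeros and then |X| copies of the digit σ-1 to X. Then X ≺ X' in lexicographic order implies Int(X) < Int(X'). -/

import Mathlib

/-- `IntEnc m σ X`: the integer in `[0..σ^(2m))` whose base-`σ` digit string
(most significant digit first, of total length `2m`) is
`X · 0^(2m-2|X|) · (σ-1)^(|X|)`. (`Nat.ofDigits` is little-endian, hence the `reverse`.) -/
def IntEnc (m σ : ℕ) (X : List ℕ) : ℕ :=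
  Nat.ofDigits σ ((X ++ List.replicate (2 * m - 2 * X.length) 0
      ++ List.replicate X.length (σ - 1)).reverse)

namespace IntEncAux

/-- big-endian value of a digit string -/
def val (σ : ℕ) (L : List ℕ) : ℕ := Nat.ofDigits σ L.reverse

lemma val_append (σ : ℕ) (A B : List ℕ) :
    val σ (A ++ B) = val σ B + σ ^ B.length * val σ A := by
  simp [val, List.reverse_append, Nat.ofDigits_append]

lemma val_cons (σ a : ℕ) (T : List ℕ) :
    val σ (a :: T) = val σ T + σ ^ T.length * a := by
  have := val_append σ [a] T
  simpa [val, Nat.ofDigits] using this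

lemma val_lt_pow {σ : ℕ} (hσ : 1 < σ) {L : List ℕ} (hL : ∀ c ∈ L, c < σ) :
    val σ L < σ ^ L.length := by
  have := Nat.ofDigits_lt_base_pow_length (l := L.reverse) hσ (by simpa using hL)
  simpa [val] using this

lemma val_replicate_zero (σ n : ℕ) : val σ (List.replicate n 0) = 0 := by
  induction n with
  | zero => simp [val, Nat.ofDigits]
  | succ n ih =>
      rw [List.replicate_succ, val_cons, ih]
      simp

lemma val_replicate_max (σ n : ℕ) (hσ : 1 < σ) :
    val σ (List.replicate n (σ - 1)) = σ ^ n - 1 := by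
  induction n with
  | zero => simp [val, Nat.ofDigits]
  | succ n ih =>
      rw [List.replicate_succ, val_cons, ih]
      simp only [List.length_replicate]
      have h1 : 1 ≤ σ ^ n := Nat.one_le_pow _ _ (by omega)
      have h2 : 1 ≤ σ ^ (n+1) := Nat.one_le_pow _ _ (by omega)
      have h3 : σ ^ n * (σ - 1) + σ ^ n = σ ^ (n+1) := by
        rw [← Nat.mul_succ]
        have : (σ - 1).succ = σ := by omega
        rw [this, ← pow_succ]
      omega

/-- padded encoding with `e` extra trailing `σ-1` digits, total length `N`. -/
def E (σ N e : ℕ) (X : List ℕ) : ℕ :=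
  val σ (X ++ List.replicate (N - 2 * X.length - e) 0
      ++ List.replicate (X.length + e) (σ - 1))

lemma E_len (σ N e : ℕ) (X : List ℕ) (h : 2 * X.length + e ≤ N) :
    (X ++ List.replicate (N - 2 * X.length - e) 0
      ++ List.replicate (X.length + e) (σ - 1)).length = N := by
  simp [List.length_append]
  omega

lemma E_lt_pow {σ : ℕ} (hσ : 1 < σ) (N e : ℕ) (X : List ℕ)
    (h : 2 * X.length + e ≤ N) (hd : ∀ c ∈ X, c < σ) :
    E σ N e X < σ ^ N := by
  have hlen := E_len σ N e X h
  have hv : E σ N e X < σ ^ (X ++ List.replicate (N - 2 * X.length - e) 0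
      ++ List.replicate (X.length + e) (σ - 1)).length := by
    apply val_lt_pow hσ
    intro c hc
    rcases List.mem_append.1 hc with hc | hc
    · rcases List.mem_append.1 hc with hc | hc
      · exact hd c hc
      · have := List.eq_of_mem_replicate hc; omega
    · have := List.eq_of_mem_replicate hc; omega
  rwa [hlen] at hv

lemma E_ge (σ : ℕ) (hσ : 1 < σ) (N e : ℕ) (X : List ℕ) :
    σ ^ (X.length + e) - 1 ≤ E σ N e X := by
  rw [E, List.append_assoc, val_append]
  rw [val_append, val_replicate_max σ _ hσ]
  rw [val_replicate_zero]
  simp only [List.length_append, List.length_replicate, Nat.mul_zero, Nat.add_zero]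
  omega

lemma E_cons (σ : ℕ) (N e a : ℕ) (T : List ℕ) (h : 2 * (T.length + 1) + e ≤ N) :
    E σ N e (a :: T) = σ ^ (N - 1) * a + E σ (N-1) (e+1) T := by
  rw [E, List.cons_append, List.cons_append, val_cons, E]
  have h1 : N - 2 * (a :: T).length - e = (N-1) - 2 * T.length - (e+1) := by
    simp; omega
  have h2 : (a :: T).length + e = T.length + (e + 1) := by simp; omega
  rw [h1, h2]
  have h3 : (T ++ List.replicate (N - 1 - 2 * T.length - (e+1)) 0
      ++ List.replicate (T.length + (e+1)) (σ - 1)).length = N - 1 :=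
    E_len σ (N-1) (e+1) T (by omega)
  rw [h3]
  ring

lemma E_mono (σ : ℕ) (hσ : 1 < σ) (N e : ℕ) (X X' : List ℕ)
    (hX : 2 * X.length + e ≤ N) (hX' : 2 * X'.length + e ≤ N)
    (hXd : ∀ c ∈ X, c < σ) (hX'd : ∀ c ∈ X', c < σ)
    (hlt : List.Lex (· < ·) X X') :
    E σ N e X < E σ N e X' := by
  induction hlt generalizing N e with
  | nil =>
      rename_i a l
      have h1 : E σ N e [] = σ ^ e - 1 := by
        rw [E]
        simp only [List.length_nil, List.nil_append, Nat.mul_zero, zero_add]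
        rw [val_append, val_replicate_zero]
        simp [val_replicate_max σ e hσ]
      have h2 := E_ge σ hσ N e (a :: l)
      have h3 : σ ^ e < σ ^ ((a :: l).length + e) :=
        Nat.pow_lt_pow_right hσ (by simp)
      have h4 : 1 ≤ σ ^ e := Nat.one_le_pow _ _ (by omega)
      omega
  | cons hTT ih =>
      rename_i a T T'
      rw [E_cons σ N e a T (by simpa using hX),
          E_cons σ N e a T' (by simpa using hX')]
      have := ih (N-1) (e+1) (by simp at hX; omega) (by simp at hX'; omega)
        (fun c hc => hXd c (List.mem_cons_of_mem _ hc))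
        (fun c hc => hX'd c (List.mem_cons_of_mem _ hc))
      omega
  | rel hab =>
      rename_i a T b T'
      rw [E_cons σ N e a T (by simpa using hX),
          E_cons σ N e b T' (by simpa using hX')]
      have hb : b < σ := hX'd b List.mem_cons_self
      have h1 : E σ (N-1) (e+1) T < σ ^ (N-1) :=
        E_lt_pow hσ (N-1) (e+1) T (by simp at hX; omega)
          (fun c hc => hXd c (List.mem_cons_of_mem _ hc))
      have h2 : σ ^ (N-1) * (a + 1) ≤ σ ^ (N-1) * b :=
        Nat.mul_le_mul_left _ hab
      have h3 : 0 ≤ E σ (N-1) (e+1) T' := Nat.zero_le _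
      nlinarith

end IntEncAux

/-- For strings `X, X'` over the alphabet `[0..σ)` of length at most `m`,
strict lexicographic order `X ≺ X'` (where a proper prefix is smaller) implies
`IntEnc m σ X < IntEnc m σ X'`. -/
theorem intEnc_strictMono (m σ : ℕ) (hm : 0 < m) (hσ : 1 < σ) (X X' : List ℕ)
    (hX : X.length ≤ m) (hX' : X'.length ≤ m)
    (hXd : ∀ c ∈ X, c < σ) (hX'd : ∀ c ∈ X', c < σ)
    (hlt : List.Lex (· < ·) X X') :
    IntEnc m σ X < IntEnc m σ X' := by
  have key := IntEncAux.E_mono σ hσ (2*m) 0 X X' (by omega) (by omega) hXd hX'd hlt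
  have e1 : IntEnc m σ X = IntEncAux.E σ (2*m) 0 X := by
    simp [IntEnc, IntEncAux.E, IntEncAux.val]
  have e2 : IntEnc m σ X' = IntEncAux.E σ (2*m) 0 X' := by
    simp [IntEnc, IntEncAux.E, IntEncAux.val]
  rw [e1, e2]
  exact key
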